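/- Let x : ℕ → ℝ be a sequence of positive real numbers satisfying x_n · x_{n+4} = x_{n+1} · x_{n+3} + 1 for all n ≥ 1. Then the quantity J_n := (x_n + x_{n+2}) / x_{n+1} is periodic in n with period 3: J_{n+3} = J_n for all n ≥ 1. Equivalently, there are period-3 coefficients J_n such that the linear relation x_{n+2} − J_n x_{n+1} + x_n = 0 holds for all n. -/

import Mathlib

/-- For the Ã₁,₃ cluster map `x n * x (n+4) = x (n+1) * x (n+3) + 1` on positive reals,
the quantity `J n = (x n + x (n+2)) / x (n+1)` is periodic with period 3, and the
linear relation `x (n+2) - J n * x (n+1) + x n = 0` holds. -/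
theorem stmt_3 (x : ℕ → ℝ) (hpos : ∀ n, 0 < x n)
    (hrec : ∀ n, 1 ≤ n → x n * x (n + 4) = x (n + 1) * x (n + 3) + 1)
    (J : ℕ → ℝ) (hJ : ∀ n, J n = (x n + x (n + 2)) / x (n + 1)) :
    (∀ n, 1 ≤ n → J (n + 3) = J n) ∧
    (∀ n, 1 ≤ n → x (n + 2) - J n * x (n + 1) + x n = 0) := by
  constructor
  · intro n hn
    have h1 := hrec n hn
    have h2 := hrec (n + 1) (by omega)
    have hx1 := (hpos (n + 1)).ne'
    have hx4 := (hpos (n + 4)).ne'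
    rw [hJ, hJ]
    have : n + 3 + 2 = n + 5 := by ring
    rw [this]
    have : n + 3 + 1 = n + 4 := by ring
    rw [this]
    have h2' : x (n + 1) * x (n + 5) = x (n + 2) * x (n + 4) + 1 := by
      have e1 : n + 1 + 4 = n + 5 := by ring
      have e2 : n + 1 + 1 = n + 2 := by ring
      have e3 : n + 1 + 3 = n + 4 := by ring
      rw [e1, e2, e3] at h2; exact h2
    field_simp
    nlinarith [h1, h2']
  · intro n _
    have hx1 := (hpos (n + 1)).ne'
    rw [hJ]
    field_simp
    ring
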